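/- arXiv:2510.07699 — 2 statements merged into one kernel-verified Lean document; each statement's English description precedes it below -/
import Mathlib

section
/- Jordan's lemma: for any two orthogonal projectors P and Q on a finite-dimensional complex Hilbert space H, there is an orthogonal decomposition of H into subspaces of dimension at most 2, each invariant under both P and Q, such that on each two-dimensional subspace both P and Q restrict to rank-one projectors. -/
open scoped InnerProductSpace

open Module LinearMap Submodule

section Aux

variable {H : Type*} [NormedAddCommGroup H] [InnerProductSpace ℂ H]

/-- The orthogonal complement of a subspace invariant under a symmetric map is invariant. -/
lemma jordan_orth_invariant {P : H →ₗ[ℂ] H} (hP : P.IsSymmetric) {B : Submodule ℂ H}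
    (hB : B.map P ≤ B) : Bᗮ.map P ≤ Bᗮ := by
  rintro _ ⟨x, hx, rfl⟩
  intro u hu
  rw [← hP u x]
  exact hx _ (hB ⟨u, hu, rfl⟩)

lemma jordan_restrict_symm {P : H →ₗ[ℂ] H} (hP : P.IsSymmetric) {B : Submodule ℂ H}
    (hB : ∀ x ∈ B, P x ∈ B) : (P.restrict hB).IsSymmetric := by
  intro x y
  simpa [Submodule.coe_inner] using hP (x : H) (y : H)

lemma jordan_restrict_idem {P : H →ₗ[ℂ] H} (hPi : P ∘ₗ P = P) {B : Submodule ℂ H}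
    (hB : ∀ x ∈ B, P x ∈ B) : (P.restrict hB) ∘ₗ (P.restrict hB) = P.restrict hB := by
  ext x
  have h := LinearMap.congr_fun hPi (x : H)
  simpa [LinearMap.restrict_coe_apply] using h

variable [FiniteDimensional ℂ H]

lemma jordan_span_singleton_le (y : H) : finrank ℂ (Submodule.span ℂ ({y} : Set H)) ≤ 1 := by
  by_cases hy : y = 0
  · subst hy
    rw [Submodule.span_zero_singleton]
    simp
  · rw [finrank_span_singleton hy]

/-- Existence of a single Jordan block. -/
lemma jordan_exists_block [Nontrivial H] (P Q : H →ₗ[ℂ] H)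
    (hP : P.IsSymmetric) (hPi : P ∘ₗ P = P) (hQi : Q ∘ₗ Q = Q) :
    ∃ B : Submodule ℂ H, B ≠ ⊥ ∧ finrank ℂ B ≤ 2 ∧ B.map P ≤ B ∧ B.map Q ≤ B ∧
      (finrank ℂ B = 2 → finrank ℂ (B.map P) = 1 ∧ finrank ℂ (B.map Q) = 1) := by
  by_cases hP0 : P = 0
  · -- take any eigenvector of Q
    obtain ⟨μ, hμ⟩ := Module.End.exists_eigenvalue (Q : Module.End ℂ H)
    obtain ⟨v, hv⟩ := hμ.exists_hasEigenvector
    have hv0 : v ≠ 0 := hv.right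
    refine ⟨Submodule.span ℂ {v}, ?_, ?_, ?_, ?_, ?_⟩
    · simpa [Submodule.span_singleton_eq_bot] using hv0
    · rw [finrank_span_singleton hv0]; omega
    · simp [hP0]
    · rw [Submodule.map_span, Set.image_singleton, hv.apply_eq_smul]
      refine Submodule.span_le.mpr ?_
      intro y hy
      rw [Set.mem_singleton_iff] at hy
      subst hy
      exact Submodule.smul_mem _ _ (Submodule.mem_span_singleton_self v)
    · intro h2; rw [finrank_span_singleton hv0] at h2; omega
  · -- P ≠ 0 : take an eigenvector of P Q P restricted to range P
    have hinv : ∀ x ∈ LinearMap.range P, (P ∘ₗ Q ∘ₗ P) x ∈ LinearMap.range P := by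
      intro x _; exact ⟨Q (P x), rfl⟩
    have hPP : ∀ x, P (P x) = P x := fun x => LinearMap.congr_fun hPi x
    have : Nontrivial (LinearMap.range P) := by
      obtain ⟨w, hw⟩ : ∃ w, P w ≠ 0 := by
        by_contra h; push_neg at h; exact hP0 (LinearMap.ext h)
      exact ⟨⟨⟨P w, w, rfl⟩, 0, fun h => hw (by simpa using congrArg Subtype.val h)⟩⟩
    obtain ⟨μ, hμ⟩ := Module.End.exists_eigenvalue
      (((P ∘ₗ Q ∘ₗ P).restrict hinv : _) : Module.End ℂ (LinearMap.range P))
    obtain ⟨u, hu⟩ := hμ.exists_hasEigenvector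
    set x : H := (u : H) with hx
    have hx0 : x ≠ 0 := fun h => hu.right (Subtype.ext h)
    have hPx : P x = x := by obtain ⟨a, ha⟩ := u.2; rw [hx, ← ha]; exact hPP a
    have hSx : P (Q x) = μ • x := by
      have := congrArg (Subtype.val) hu.apply_eq_smul
      simpa [LinearMap.restrict_apply, ← hx, hPx] using this
    refine ⟨Submodule.span ℂ {x, Q x}, ?_, ?_, ?_, ?_, ?_⟩
    · intro h
      apply hx0
      have : x ∈ Submodule.span ℂ ({x, Q x} : Set H) :=
        Submodule.subset_span (by simp)
      rwa [h, Submodule.mem_bot] at this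
    · rw [show ({x, Q x} : Set H) = insert x {Q x} from rfl, Submodule.span_insert]
      refine le_trans (Submodule.finrank_add_le_finrank_add_finrank _ _) ?_
      have e1 : finrank ℂ (Submodule.span ℂ ({x} : Set H)) ≤ 1 := jordan_span_singleton_le x
      have e2 : finrank ℂ (Submodule.span ℂ ({Q x} : Set H)) ≤ 1 := jordan_span_singleton_le (Q x)
      omega
    · rw [Submodule.map_span]
      refine Submodule.span_le.mpr ?_
      rintro _ ⟨y, hy, rfl⟩
      rcases hy with rfl | rfl
      · rw [hPx]; exact Submodule.subset_span (by simp)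
      · rw [hSx]
        exact Submodule.smul_mem _ _ (Submodule.subset_span (by simp))
    · rw [Submodule.map_span]
      refine Submodule.span_le.mpr ?_
      rintro _ ⟨y, hy, rfl⟩
      rcases hy with rfl | rfl
      · exact Submodule.subset_span (by simp)
      · have : Q (Q x) = Q x := LinearMap.congr_fun hQi x
        rw [this]; exact Submodule.subset_span (by simp)
    · intro h2
      have hQx0 : Q x ≠ 0 := by
        intro h0
        have : Submodule.span ℂ ({x, Q x} : Set H) = Submodule.span ℂ ({x} : Set H) := by
          rw [h0]
          rw [show ({x, (0:H)} : Set H) = insert (0:H) {x} from by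
            ext; simp [or_comm]]
          exact Submodule.span_insert_zero
        rw [this, finrank_span_singleton hx0] at h2
        omega
      constructor
      · have : (Submodule.span ℂ ({x, Q x} : Set H)).map P = Submodule.span ℂ ({x} : Set H) := by
          apply le_antisymm
          · rw [Submodule.map_span]
            refine Submodule.span_le.mpr ?_
            rintro _ ⟨y, hy, rfl⟩
            rcases hy with rfl | rfl
            · rw [hPx]; exact Submodule.mem_span_singleton_self x
            · rw [hSx]; exact Submodule.smul_mem _ _ (Submodule.mem_span_singleton_self x)
          · refine Submodule.span_le.mpr ?_
            rintro _ rfl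
            exact ⟨x, Submodule.subset_span (by simp), hPx⟩
        rw [this, finrank_span_singleton hx0]
      · have : (Submodule.span ℂ ({x, Q x} : Set H)).map Q = Submodule.span ℂ ({Q x} : Set H) := by
          apply le_antisymm
          · rw [Submodule.map_span]
            refine Submodule.span_le.mpr ?_
            rintro _ ⟨y, hy, rfl⟩
            rcases hy with rfl | rfl
            · exact Submodule.mem_span_singleton_self (Q x)
            · have : Q (Q x) = Q x := LinearMap.congr_fun hQi x
              rw [this]; exact Submodule.mem_span_singleton_self (Q x)
          · refine Submodule.span_le.mpr ?_
            rintro _ rfl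
            exact ⟨x, Submodule.subset_span (by simp), rfl⟩
        rw [this, finrank_span_singleton hQx0]

/-- The main induction. -/
lemma jordan_aux (n : ℕ) : ∀ {H : Type u_1} [NormedAddCommGroup H] [InnerProductSpace ℂ H]
    [FiniteDimensional ℂ H] (P Q : H →ₗ[ℂ] H), P.IsSymmetric → P ∘ₗ P = P →
    Q.IsSymmetric → Q ∘ₗ Q = Q → finrank ℂ H ≤ n →
    ∃ (ι : Type) (_ : Fintype ι) (B : ι → Submodule ℂ H),
      (∀ i j, i ≠ j → ∀ x ∈ B i, ∀ y ∈ B j, ⟪x, y⟫_ℂ = 0)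
      ∧ (⨆ i, B i) = ⊤
      ∧ (∀ i, finrank ℂ (B i) ≤ 2)
      ∧ (∀ i, (B i).map P ≤ B i)
      ∧ (∀ i, (B i).map Q ≤ B i)
      ∧ (∀ i, finrank ℂ (B i) = 2 →
          finrank ℂ ((B i).map P) = 1 ∧ finrank ℂ ((B i).map Q) = 1) := by
  induction n with
  | zero =>
    intro H _ _ _ P Q _ _ _ _ hn
    have : Subsingleton H := by
      rw [← Module.finrank_zero_iff (R := ℂ)]; omega
    refine ⟨Empty, inferInstance, fun i => i.elim, fun i => i.elim, ?_, fun i => i.elim,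
      fun i => i.elim, fun i => i.elim, fun i => i.elim⟩
    apply eq_top_iff.mpr
    intro x _
    rw [Subsingleton.elim x 0]
    exact zero_mem _
  | succ n IH =>
    intro H _ _ _ P Q hP hPi hQ hQi hn
    by_cases h0 : Subsingleton H
    · have : Subsingleton H := h0
      refine ⟨Empty, inferInstance, fun i => i.elim, fun i => i.elim, ?_, fun i => i.elim,
        fun i => i.elim, fun i => i.elim, fun i => i.elim⟩
      apply eq_top_iff.mpr
      intro x _
      rw [Subsingleton.elim x 0]
      exact zero_mem _
    · have : Nontrivial H := not_subsingleton_iff_nontrivial.mp h0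
      obtain ⟨B, hBbot, hB2, hBP, hBQ, hBrk⟩ := jordan_exists_block P Q hP hPi hQi
      -- orthogonal complement
      have hOP : Bᗮ.map P ≤ Bᗮ := jordan_orth_invariant hP hBP
      have hOQ : Bᗮ.map Q ≤ Bᗮ := jordan_orth_invariant hQ hBQ
      have hOP' : ∀ x ∈ Bᗮ, P x ∈ Bᗮ := fun x hx => hOP ⟨x, hx, rfl⟩
      have hOQ' : ∀ x ∈ Bᗮ, Q x ∈ Bᗮ := fun x hx => hOQ ⟨x, hx, rfl⟩
      set P' := P.restrict hOP'
      set Q' := Q.restrict hOQ'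
      have hdim : finrank ℂ Bᗮ ≤ n := by
        have h1 : finrank ℂ B + finrank ℂ Bᗮ = finrank ℂ H :=
          Submodule.finrank_add_finrank_orthogonal B
        have h2 : 0 < finrank ℂ B := by
          have : finrank ℂ B ≠ 0 := fun h => hBbot (Submodule.finrank_eq_zero.mp h)
          omega
        omega
      obtain ⟨ι, hι, C, hC1, hC2, hC3, hC4, hC5, hC6⟩ :=
        IH P' Q' (jordan_restrict_symm hP hOP') (jordan_restrict_idem hPi hOP')
          (jordan_restrict_symm hQ hOQ') (jordan_restrict_idem hQi hOQ') hdim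
      -- key commutation: P ∘ subtype = subtype ∘ P'
      have hPcomm : P ∘ₗ Bᗮ.subtype = Bᗮ.subtype ∘ₗ P' := by
        ext x
        rfl
      have hQcomm : Q ∘ₗ Bᗮ.subtype = Bᗮ.subtype ∘ₗ Q' := by
        ext x
        rfl
      have hcP : ∀ i, ((C i).map Bᗮ.subtype).map P = ((C i).map P').map Bᗮ.subtype := by
        intro i
        rw [← Submodule.map_comp, hPcomm, Submodule.map_comp]
      have hcQ : ∀ i, ((C i).map Bᗮ.subtype).map Q = ((C i).map Q').map Bᗮ.subtype := by
        intro i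
        rw [← Submodule.map_comp, hQcomm, Submodule.map_comp]
      refine ⟨Option ι, @instFintypeOption ι hι, fun o => o.elim B (fun i => (C i).map Bᗮ.subtype),
        ?_, ?_, ?_, ?_, ?_, ?_⟩
      · rintro (_ | i) (_ | j) hij x hx y hy
        · exact absurd rfl hij
        · exact (Submodule.map_subtype_le _ _ hy) x hx
        · exact (Submodule.mem_orthogonal' _ _).mp (Submodule.map_subtype_le _ _ hx) y hy
        · obtain ⟨x', hx', rfl⟩ := hx
          obtain ⟨y', hy', rfl⟩ := hy
          exact hC1 i j (fun h => hij (by rw [h])) x' hx' y' hy'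
      · rw [iSup_option]
        dsimp only [Option.elim]
        rw [← Submodule.map_iSup, hC2, Submodule.map_subtype_top]
        exact Submodule.isCompl_orthogonal_of_hasOrthogonalProjection.sup_eq_top
      · rintro (_ | i)
        · exact hB2
        · dsimp only [Option.elim]
          erw [Submodule.finrank_map_subtype_eq]; exact hC3 i
      · rintro (_ | i)
        · exact hBP
        · dsimp only [Option.elim]
          rw [hcP i]; exact Submodule.map_mono ((hC4 i).trans le_rfl) |>.trans
            (Submodule.map_mono le_rfl)
      · rintro (_ | i)
        · exact hBQ
        · dsimp only [Option.elim]
          rw [hcQ i]; exact Submodule.map_mono (hC5 i)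
      · rintro (_ | i) h2
        · exact hBrk h2
        · dsimp only [Option.elim] at h2 ⊢
          erw [Submodule.finrank_map_subtype_eq] at h2
          obtain ⟨r1, r2⟩ := hC6 i h2
          constructor
          · erw [hcP i, Submodule.finrank_map_subtype_eq]; exact r1
          · erw [hcQ i, Submodule.finrank_map_subtype_eq]; exact r2

end Aux

/-- **Jordan's lemma.** Any two orthogonal projectors `P`, `Q` on a finite-dimensional
complex Hilbert space admit an orthogonal decomposition of the space into subspaces of
dimension at most 2, each invariant under both `P` and `Q`, such that on each
two-dimensional subspace both `P` and `Q` restrict to rank-one projectors. -/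
theorem jordans_lemma {H : Type*} [NormedAddCommGroup H] [InnerProductSpace ℂ H]
    [FiniteDimensional ℂ H] (P Q : H →ₗ[ℂ] H)
    (hPadj : LinearMap.adjoint P = P) (hPidem : P ∘ₗ P = P)
    (hQadj : LinearMap.adjoint Q = Q) (hQidem : Q ∘ₗ Q = Q) :
    ∃ (ι : Type) (_ : Fintype ι) (B : ι → Submodule ℂ H),
      (∀ i j, i ≠ j → ∀ x ∈ B i, ∀ y ∈ B j, ⟪x, y⟫_ℂ = 0)
      ∧ (⨆ i, B i) = ⊤
      ∧ (∀ i, Module.finrank ℂ (B i) ≤ 2)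
      ∧ (∀ i, (B i).map P ≤ B i)
      ∧ (∀ i, (B i).map Q ≤ B i)
      ∧ (∀ i, Module.finrank ℂ (B i) = 2 →
          Module.finrank ℂ ((B i).map P) = 1 ∧ Module.finrank ℂ ((B i).map Q) = 1) := by
  have hP : P.IsSymmetric := (LinearMap.isSymmetric_iff_isSelfAdjoint P).mpr hPadj
  have hQ : Q.IsSymmetric := (LinearMap.isSymmetric_iff_isSelfAdjoint Q).mpr hQadj
  exact jordan_aux (Module.finrank ℂ H) P Q hP hPidem hQ hQidem le_rfl
end

section
/- Suppose orthogonal projectors B₁, B₂ ≤ P (acting on the support of P, of dimension r) satisfy: for every unit vector u ∈ supp(P) with B₁u = 0 one has ⟨u|B₂|u⟩ ≥ 0.9. Then B₁ + B₂ has rank equal to rank(P), and in any Jordan 2×2 block of (B₁,B₂) with B₁|_B = |w₁⟩⟨w₁| and B₂|_B = |w₂⟩⟨w₂|, the overlap satisfies |⟨w₁|w₂⟩|² ≤ 0.1. -/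
open scoped InnerProductSpace

private theorem proj_inner {H : Type*} [NormedAddCommGroup H] [InnerProductSpace ℂ H]
    [FiniteDimensional ℂ H] (B : H →ₗ[ℂ] H)
    (hadj : LinearMap.adjoint B = B) (hidem : B ∘ₗ B = B) (u : H) :
    ⟪u, B u⟫_ℂ = (‖B u‖ : ℂ) ^ 2 := by
  have : B (B u) = B u := congrFun (congrArg DFunLike.coe hidem) u
  calc ⟪u, B u⟫_ℂ = ⟪u, B (B u)⟫_ℂ := by rw [this]
    _ = ⟪LinearMap.adjoint B u, B u⟫_ℂ := (LinearMap.adjoint_inner_left B (B u) u).symm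
    _ = ⟪B u, B u⟫_ℂ := by rw [hadj]
    _ = (‖B u‖ : ℂ) ^ 2 := inner_self_eq_norm_sq_to_K (B u)

/-- If subprojectors `B₁, B₂` of a projector `P` (on a finite-dimensional complex Hilbert
space) satisfy: every unit vector `u` in the support of `P` with `B₁ u = 0` has
`⟨u|B₂|u⟩ ≥ 0.9`, then `B₁ + B₂` has the same rank as `P`, and in any Jordan `2 × 2`
block of `(B₁, B₂)` inside the support of `P`, with `B₁|_B = |w₁⟩⟨w₁|` and
`B₂|_B = |w₂⟩⟨w₂|`, the overlap satisfies `|⟨w₁|w₂⟩|² ≤ 0.1`. -/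
theorem robust_covering {H : Type*} [NormedAddCommGroup H] [InnerProductSpace ℂ H]
    [FiniteDimensional ℂ H] (P B₁ B₂ : H →ₗ[ℂ] H)
    (hPadj : LinearMap.adjoint P = P) (hPidem : P ∘ₗ P = P)
    (hB₁adj : LinearMap.adjoint B₁ = B₁) (hB₁idem : B₁ ∘ₗ B₁ = B₁)
    (hB₂adj : LinearMap.adjoint B₂ = B₂) (hB₂idem : B₂ ∘ₗ B₂ = B₂)
    (hB₁P : P ∘ₗ B₁ = B₁) (hPB₁ : B₁ ∘ₗ P = B₁)
    (hB₂P : P ∘ₗ B₂ = B₂) (hPB₂ : B₂ ∘ₗ P = B₂)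
    (hcover : ∀ u : H, P u = u → ‖u‖ = 1 → B₁ u = 0 → 0.9 ≤ (⟪u, B₂ u⟫_ℂ).re) :
    Module.finrank ℂ (LinearMap.range (B₁ + B₂)) = Module.finrank ℂ (LinearMap.range P)
    ∧ ∀ (B : Submodule ℂ H) (w₁ w₂ : H),
        Module.finrank ℂ B = 2 → (∀ x ∈ B, P x = x) →
        w₁ ∈ B → w₂ ∈ B → ‖w₁‖ = 1 → ‖w₂‖ = 1 →
        (∀ x ∈ B, B₁ x = ⟪w₁, x⟫_ℂ • w₁) →
        (∀ x ∈ B, B₂ x = ⟪w₂, x⟫_ℂ • w₂) →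
        ‖⟪w₁, w₂⟫_ℂ‖ ^ 2 ≤ 0.1 := by
  constructor
  · -- rank part
    set A := B₁ + B₂ with hA
    -- injectivity on range P
    have hinj : ∀ u : H, P u = u → A u = 0 → u = 0 := by
      intro u hPu hAu
      by_contra hu0
      set v := (‖u‖ : ℂ)⁻¹ • u with hv
      have hun : ‖u‖ ≠ 0 := by simpa using hu0
      have hvn : ‖v‖ = 1 := by
        rw [hv, norm_smul]
        simp [norm_inv, inv_mul_cancel₀ hun]
      have hPv : P v = v := by rw [hv, map_smul, hPu]
      have hzero : (‖B₁ u‖ : ℂ) ^ 2 + (‖B₂ u‖ : ℂ) ^ 2 = 0 := by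
        have : ⟪u, A u⟫_ℂ = 0 := by rw [hAu, inner_zero_right]
        rw [hA] at this
        simp only [LinearMap.add_apply, inner_add_right] at this
        rw [proj_inner B₁ hB₁adj hB₁idem, proj_inner B₂ hB₂adj hB₂idem] at this
        exact this
      have h1 : (‖B₁ u‖ ^ 2 + ‖B₂ u‖ ^ 2 : ℝ) = 0 := by exact_mod_cast hzero
      have hB1u : B₁ u = 0 := by
        have := (add_eq_zero_iff_of_nonneg (by positivity) (by positivity)).mp h1
        have := this.1
        have : ‖B₁ u‖ = 0 := by nlinarith [norm_nonneg (B₁ u)]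
        simpa using this
      have hB2u : B₂ u = 0 := by
        have := (add_eq_zero_iff_of_nonneg (by positivity) (by positivity)).mp h1
        have := this.2
        have : ‖B₂ u‖ = 0 := by nlinarith [norm_nonneg (B₂ u)]
        simpa using this
      have hB1v : B₁ v = 0 := by rw [hv, map_smul, hB1u, smul_zero]
      have := hcover v hPv hvn hB1v
      have hB2v : B₂ v = 0 := by rw [hv, map_smul, hB2u, smul_zero]
      rw [hB2v, inner_zero_right] at this
      norm_num at this
    have hAP : A ∘ₗ P = A := by
      rw [hA, LinearMap.add_comp, hPB₁, hPB₂]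
    have hrange : LinearMap.range A = Submodule.map A (LinearMap.range P) := by
      conv_lhs => rw [← hAP]
      exact LinearMap.range_comp P A
    set f := A.domRestrict (LinearMap.range P) with hf
    have hfr : LinearMap.range f = Submodule.map A (LinearMap.range P) := by
      ext x
      simp only [hf, LinearMap.mem_range, Submodule.mem_map, LinearMap.domRestrict_apply,
        Subtype.exists, exists_prop]
    have hfk : LinearMap.ker f = ⊥ := by
      rw [LinearMap.ker_eq_bot']
      rintro ⟨m, hm⟩ hfm
      obtain ⟨y, rfl⟩ := hm
      have hPm : P (P y) = P y := congrFun (congrArg DFunLike.coe hPidem) y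
      have : A (P y) = 0 := hfm
      have := hinj (P y) hPm this
      exact Subtype.ext this
    have := LinearMap.finrank_range_add_finrank_ker f
    rw [hfk, hfr] at this
    simp only [finrank_bot, add_zero] at this
    rw [hrange, this]
  · -- overlap part
    intro B w₁ w₂ hB2 hPfix hw₁B hw₂B hw₁n hw₂n hB₁B hB₂B
    have hw₁0 : w₁ ≠ 0 := by intro h; rw [h] at hw₁n; simp at hw₁n
    have hlt : (ℂ ∙ w₁) < B := by
      refine lt_of_le_of_ne ((Submodule.span_singleton_le_iff_mem _ _).mpr hw₁B) ?_
      intro h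
      have := finrank_span_singleton (K := ℂ) hw₁0
      rw [h, hB2] at this
      norm_num at this
    obtain ⟨v, hvB, hv⟩ := SetLike.exists_of_lt hlt
    set w' := v - ⟪w₁, v⟫_ℂ • w₁ with hw'
    have hw'B : w' ∈ B := B.sub_mem hvB (B.smul_mem _ hw₁B)
    have hw'0 : w' ≠ 0 := by
      intro h
      apply hv
      have : v = ⟪w₁, v⟫_ℂ • w₁ := by
        have := sub_eq_zero.mp h
        exact this
      rw [this]
      exact Submodule.smul_mem _ _ (Submodule.mem_span_singleton_self w₁)
    have hw₁w₁ : ⟪w₁, w₁⟫_ℂ = 1 := by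
      rw [inner_self_eq_norm_sq_to_K, hw₁n]; norm_num
    have horth : ⟪w₁, w'⟫_ℂ = 0 := by
      rw [hw', inner_sub_right, inner_smul_right, hw₁w₁, mul_one, sub_self]
    set u := (‖w'‖ : ℂ)⁻¹ • w' with hu
    have hw'n : ‖w'‖ ≠ 0 := by simpa using hw'0
    have huB : u ∈ B := B.smul_mem _ hw'B
    have hun : ‖u‖ = 1 := by
      rw [hu, norm_smul]; simp [inv_mul_cancel₀ hw'n]
    have huorth : ⟪w₁, u⟫_ℂ = 0 := by
      rw [hu, inner_smul_right, horth, mul_zero]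
    have hB₁u : B₁ u = 0 := by rw [hB₁B u huB, huorth, zero_smul]
    have hcov := hcover u (hPfix u huB) hun hB₁u
    have hB₂u : B₂ u = ⟪w₂, u⟫_ℂ • w₂ := hB₂B u huB
    have hre : (⟪u, B₂ u⟫_ℂ).re = ‖⟪u, w₂⟫_ℂ‖ ^ 2 := by
      have h1 : ⟪w₂, u⟫_ℂ = (starRingEnd ℂ) ⟪u, w₂⟫_ℂ := (inner_conj_symm w₂ u).symm
      rw [hB₂u, inner_smul_right, h1, mul_comm, Complex.mul_conj]
      simp [Complex.normSq_eq_norm_sq, ← Complex.ofReal_pow]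
    rw [hre] at hcov
    -- Bessel
    have honb : Orthonormal ℂ (![w₁, u]) := by
      rw [orthonormal_iff_ite]
      intro i j
      fin_cases i <;> fin_cases j <;>
        simp [hw₁w₁, huorth, ← inner_conj_symm u w₁, huorth,
          inner_self_eq_norm_sq_to_K, hun, hw₁n]
    have hbes := honb.sum_inner_products_le (𝕜 := ℂ) (s := Finset.univ) w₂
    rw [Fin.sum_univ_two] at hbes
    simp only [Matrix.cons_val_zero, Matrix.cons_val_one, Matrix.head_cons, hw₂n] at hbes
    have h2 : ‖⟪u, w₂⟫_ℂ‖ ^ 2 ≥ 0.9 := hcov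
    nlinarith [hbes]
end
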